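/- The projector onto the symmetric subspace of (ℂ²)^⊗4 equals (15/48)(I + (1/3)∑_{pairs (i,j)} σᵢ·σⱼ + (1/15)∑_{pairings {(i,j),(k,l)}} (σᵢ·σⱼ)(σₖ·σₗ)), where the first sum runs over the 6 unordered pairs {i,j} ⊆ {1,2,3,4} and the second over the 3 perfect matchings of {1,2,3,4}. -/
import Mathlib


open Matrix

/-- The three Pauli matrices. -/
noncomputable def pauli : Fin 3 → Matrix (Fin 2) (Fin 2) ℂ :=
  ![!![0, 1; 1, 0], !![0, -Complex.I; Complex.I, 0], !![1, 0; 0, -1]]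

/-- The operator on (ℂ^d)^⊗n permuting tensor factors according to π:
it sends `e_{i₁} ⊗ ... ⊗ e_{i_n}` to `e_{i_{π⁻¹(1)}} ⊗ ... ⊗ e_{i_{π⁻¹(n)}}`. -/
noncomputable def permOp (d n : ℕ) (π : Equiv.Perm (Fin n)) :
    Matrix (Fin n → Fin d) (Fin n → Fin d) ℂ :=
  Matrix.of fun f g => if f = g ∘ ⇑π⁻¹ then 1 else 0

/-- The one-site operator acting as the 2×2 matrix `A` on tensor factor `i`
of (ℂ²)^⊗n and as the identity elsewhere. -/
noncomputable def opAt {n : ℕ} (i : Fin n) (A : Matrix (Fin 2) (Fin 2) ℂ) :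
    Matrix (Fin n → Fin 2) (Fin n → Fin 2) ℂ :=
  Matrix.of fun f g => ∏ k, if k = i then A (f k) (g k) else (if f k = g k then 1 else 0)

/-- σᵢ·σⱼ = ∑_{a ∈ {x,y,z}} (σᵃ at leg i)(σᵃ at leg j) on (ℂ²)^⊗n. -/
noncomputable def sdot {n : ℕ} (i j : Fin n) :
    Matrix (Fin n → Fin 2) (Fin n → Fin 2) ℂ :=
  ∑ a : Fin 3, opAt i (pauli a) * opAt j (pauli a)

-- ### auxiliary lemmas

lemma opAt_apply {n : ℕ} (i : Fin n) (A : Matrix (Fin 2) (Fin 2) ℂ)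
    (f g : Fin n → Fin 2) :
    opAt i A f g = A (f i) (g i) *
      ∏ k ∈ Finset.univ.erase i, (if f k = g k then (1:ℂ) else 0) := by
  rw [opAt, Matrix.of_apply, ← Finset.mul_prod_erase _ _ (Finset.mem_univ i), if_pos rfl]
  congr 1
  exact Finset.prod_congr rfl fun k hk => if_neg (Finset.ne_of_mem_erase hk)

lemma opAt_mul_apply {n : ℕ} {i j : Fin n} (hij : i ≠ j)
    (A B : Matrix (Fin 2) (Fin 2) ℂ) (f g : Fin n → Fin 2) :
    (opAt i A * opAt j B) f g
      = A (f i) (g i) * B (f j) (g j) *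
          ∏ k ∈ (Finset.univ.erase i).erase j, (if f k = g k then (1:ℂ) else 0) := by
  rw [Matrix.mul_apply]
  rw [Finset.sum_eq_single (Function.update f i (g i))]
  · rw [opAt_apply, opAt_apply]
    rw [show Function.update f i (g i) i = g i from Function.update_self i (g i) f]
    have h1 : ∏ k ∈ Finset.univ.erase i,
        (if f k = Function.update f i (g i) k then (1:ℂ) else 0) = 1 := by
      refine Finset.prod_eq_one fun k hk => ?_
      rw [Function.update_of_ne (Finset.ne_of_mem_erase hk), if_pos rfl]
    rw [h1, mul_one]
    rw [show Function.update f i (g i) j = f j from Function.update_of_ne hij.symm _ _]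
    have hi : i ∈ Finset.univ.erase j := Finset.mem_erase.2 ⟨hij, Finset.mem_univ i⟩
    rw [← Finset.mul_prod_erase _ _ hi]
    rw [show Function.update f i (g i) i = g i from Function.update_self i (g i) f, if_pos rfl,
      one_mul]
    have h2 : ∏ k ∈ (Finset.univ.erase j).erase i,
        (if Function.update f i (g i) k = g k then (1:ℂ) else 0)
        = ∏ k ∈ (Finset.univ.erase j).erase i, (if f k = g k then (1:ℂ) else 0) := by
      refine Finset.prod_congr rfl fun k hk => ?_
      rw [Function.update_of_ne (Finset.ne_of_mem_erase hk)]
    rw [h2, show (Finset.univ.erase j).erase i = (Finset.univ.erase i).erase j from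
      Finset.erase_right_comm]
    ring
  · intro h _ hne
    by_cases hig : h i = g i
    · -- then some k ≠ i has h k ≠ f k
      have : ∃ k, k ≠ i ∧ h k ≠ f k := by
        by_contra hc
        push_neg at hc
        apply hne
        funext k
        by_cases hk : k = i
        · subst hk; rw [Function.update_self]; exact hig
        · rw [Function.update_of_ne hk]; exact hc k hk
      obtain ⟨k, hki, hkf⟩ := this
      have hk' : k ∈ Finset.univ.erase i := Finset.mem_erase.2 ⟨hki, Finset.mem_univ k⟩
      have hz : (if f k = h k then (1:ℂ) else 0) = 0 := if_neg (fun hh => hkf hh.symm)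
      rw [opAt_apply i, Finset.prod_eq_zero hk' hz, mul_zero, zero_mul]
    · have hi : i ∈ Finset.univ.erase j := Finset.mem_erase.2 ⟨hij, Finset.mem_univ i⟩
      have hz : (if h i = g i then (1:ℂ) else 0) = 0 := if_neg hig
      rw [opAt_apply j, Finset.prod_eq_zero hi hz, mul_zero, mul_zero]
  · intro hmem; exact absurd (Finset.mem_univ _) hmem

lemma pauli_sum (x u y v : Fin 2) :
    ∑ a : Fin 3, pauli a x u * pauli a y v
      = 2 * ((if x = v then (1:ℂ) else 0) * (if y = u then 1 else 0))
        - (if x = u then (1:ℂ) else 0) * (if y = v then 1 else 0) := by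
  fin_cases x <;> fin_cases u <;> fin_cases y <;> fin_cases v <;>
    simp [pauli, Fin.sum_univ_three] <;>
    ring_nf

lemma delta_split {n : ℕ} {i j : Fin n} (hij : i ≠ j) (u v : Fin n → Fin 2) :
    (if u = v then (1:ℂ) else 0)
      = (if u i = v i then 1 else 0) * ((if u j = v j then 1 else 0) *
          ∏ k ∈ (Finset.univ.erase i).erase j, (if u k = v k then (1:ℂ) else 0)) := by
  have h : (if u = v then (1:ℂ) else 0) = ∏ k, (if u k = v k then (1:ℂ) else 0) := by
    rw [Finset.prod_boole]
    simp [funext_iff]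
  rw [h, ← Finset.mul_prod_erase _ _ (Finset.mem_univ i),
    ← Finset.mul_prod_erase _ _ (Finset.mem_erase.2 ⟨hij.symm, Finset.mem_univ j⟩)]

lemma sdot_eq {n : ℕ} (i j : Fin n) (hij : i ≠ j) :
    sdot i j = (2:ℂ) • permOp 2 n (Equiv.swap i j) - 1 := by
  ext f g
  have hL : sdot i j f g = ∑ a : Fin 3,
      (opAt i (pauli a) * opAt j (pauli a)) f g := by
    rw [sdot]; simp [Matrix.sum_apply]
  rw [hL]
  simp only [opAt_mul_apply hij]
  rw [← Finset.sum_mul, pauli_sum]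
  have hswap : permOp 2 n (Equiv.swap i j) f g
      = (if f i = g j then (1:ℂ) else 0) * ((if f j = g i then 1 else 0) *
          ∏ k ∈ (Finset.univ.erase i).erase j, (if f k = g k then (1:ℂ) else 0)) := by
    rw [permOp, Matrix.of_apply, Equiv.swap_inv]
    rw [delta_split hij f (g ∘ ⇑(Equiv.swap i j))]
    rw [Function.comp_apply, Function.comp_apply, Equiv.swap_apply_left, Equiv.swap_apply_right]
    congr 1
    congr 1
    refine Finset.prod_congr rfl fun k hk => ?_
    have hki : k ≠ i := Finset.ne_of_mem_erase (Finset.mem_of_mem_erase hk)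
    have hkj : k ≠ j := Finset.ne_of_mem_erase hk
    rw [Function.comp_apply, Equiv.swap_apply_of_ne_of_ne hki hkj]
  have hone : (1 : Matrix (Fin n → Fin 2) (Fin n → Fin 2) ℂ) f g
      = (if f i = g i then (1:ℂ) else 0) * ((if f j = g j then 1 else 0) *
          ∏ k ∈ (Finset.univ.erase i).erase j, (if f k = g k then (1:ℂ) else 0)) := by
    rw [Matrix.one_apply, ← delta_split hij]
  rw [Matrix.sub_apply, Matrix.smul_apply, hswap, hone, smul_eq_mul]
  ring

lemma permOp_mul (n : ℕ) (σ τ : Equiv.Perm (Fin n)) :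
    permOp 2 n (σ * τ) = permOp 2 n σ * permOp 2 n τ := by
  ext f g
  rw [Matrix.mul_apply]
  simp only [permOp, Matrix.of_apply]
  rw [Finset.sum_eq_single (g ∘ ⇑τ⁻¹)]
  · rw [if_pos rfl, mul_one]
    have : g ∘ ⇑(σ * τ)⁻¹ = (g ∘ ⇑τ⁻¹) ∘ ⇑σ⁻¹ := by
      rw [_root_.mul_inv_rev]; rfl
    rw [this]
  · intro h _ hne
    rw [if_neg hne, mul_zero]
  · intro hmem; exact absurd (Finset.mem_univ _) hmem

def permZ (π : Equiv.Perm (Fin 4)) : Matrix (Fin 4 → Fin 2) (Fin 4 → Fin 2) ℤ :=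
  Matrix.of fun f g => if f = g ∘ ⇑π⁻¹ then 1 else 0

noncomputable def φ : Matrix (Fin 4 → Fin 2) (Fin 4 → Fin 2) ℤ →+*
    Matrix (Fin 4 → Fin 2) (Fin 4 → Fin 2) ℂ :=
  (Int.castRingHom ℂ).mapMatrix

lemma φ_permZ (π : Equiv.Perm (Fin 4)) : φ (permZ π) = permOp 2 4 π := by
  ext f g
  simp [φ, permZ, permOp, RingHom.mapMatrix_apply, Matrix.map_apply, apply_ite]

def permList : List (Equiv.Perm (Fin 4)) :=
  [(1 : Equiv.Perm (Fin 4)),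
  Equiv.swap 2 3,
  Equiv.swap 1 2,
  (Equiv.swap 1 2 * Equiv.swap 2 3),
  (Equiv.swap 1 3 * Equiv.swap 3 2),
  Equiv.swap 1 3,
  Equiv.swap 0 1,
  (Equiv.swap 0 1 * Equiv.swap 2 3),
  (Equiv.swap 0 1 * Equiv.swap 1 2),
  (Equiv.swap 0 1 * Equiv.swap 1 2 * Equiv.swap 2 3),
  (Equiv.swap 0 1 * Equiv.swap 1 3 * Equiv.swap 3 2),
  (Equiv.swap 0 1 * Equiv.swap 1 3),
  (Equiv.swap 0 2 * Equiv.swap 2 1),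
  (Equiv.swap 0 2 * Equiv.swap 2 3 * Equiv.swap 3 1),
  Equiv.swap 0 2,
  (Equiv.swap 0 2 * Equiv.swap 2 3),
  (Equiv.swap 0 2 * Equiv.swap 1 3),
  (Equiv.swap 0 2 * Equiv.swap 2 1 * Equiv.swap 1 3),
  (Equiv.swap 0 3 * Equiv.swap 3 2 * Equiv.swap 2 1),
  (Equiv.swap 0 3 * Equiv.swap 3 1),
  (Equiv.swap 0 3 * Equiv.swap 3 2),
  Equiv.swap 0 3,
  (Equiv.swap 0 3 * Equiv.swap 3 1 * Equiv.swap 1 2),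
  (Equiv.swap 0 3 * Equiv.swap 1 2)]

set_option maxHeartbeats 1000000 in
lemma univ_eq_permList : (Finset.univ : Finset (Equiv.Perm (Fin 4))) = permList.toFinset := by
  decide

set_option maxHeartbeats 1000000 in
lemma permList_nodup : permList.Nodup := by decide

def eF : (Fin 4 → Fin 2) ≃ Fin 16 := finFunctionFinEquiv

set_option maxHeartbeats 4000000 in
lemma keyZ_reindexed : Matrix.reindex eF eF ((permList.map permZ).sum)
    = Matrix.reindex eF eF ((-6 : ℤ) • 1 + (4 : ℤ) • (permZ (Equiv.swap 0 1) + permZ (Equiv.swap 0 2)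
        + permZ (Equiv.swap 0 3) + permZ (Equiv.swap 1 2) + permZ (Equiv.swap 1 3)
        + permZ (Equiv.swap 2 3))
      + (2 : ℤ) • (permZ (Equiv.swap 0 1 * Equiv.swap 2 3)
        + permZ (Equiv.swap 0 2 * Equiv.swap 1 3)
        + permZ (Equiv.swap 0 3 * Equiv.swap 1 2))) := by
  decide

lemma keyZ : (permList.map permZ).sum
    = (-6 : ℤ) • 1 + (4 : ℤ) • (permZ (Equiv.swap 0 1) + permZ (Equiv.swap 0 2)
        + permZ (Equiv.swap 0 3) + permZ (Equiv.swap 1 2) + permZ (Equiv.swap 1 3)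
        + permZ (Equiv.swap 2 3))
      + (2 : ℤ) • (permZ (Equiv.swap 0 1 * Equiv.swap 2 3)
        + permZ (Equiv.swap 0 2 * Equiv.swap 1 3)
        + permZ (Equiv.swap 0 3 * Equiv.swap 1 2)) :=
  (Matrix.reindex eF eF).injective keyZ_reindexed

lemma keyC : ∑ π : Equiv.Perm (Fin 4), permOp 2 4 π
    = (-6 : ℂ) • 1 + (4 : ℂ) • (permOp 2 4 (Equiv.swap 0 1) + permOp 2 4 (Equiv.swap 0 2)
        + permOp 2 4 (Equiv.swap 0 3) + permOp 2 4 (Equiv.swap 1 2) + permOp 2 4 (Equiv.swap 1 3)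
        + permOp 2 4 (Equiv.swap 2 3))
      + (2 : ℂ) • (permOp 2 4 (Equiv.swap 0 1 * Equiv.swap 2 3)
        + permOp 2 4 (Equiv.swap 0 2 * Equiv.swap 1 3)
        + permOp 2 4 (Equiv.swap 0 3 * Equiv.swap 1 2)) := by
  have h1 : ∑ π : Equiv.Perm (Fin 4), permOp 2 4 π = φ ((permList.map permZ).sum) := by
    rw [map_list_sum, List.map_map, show φ ∘ permZ = permOp 2 4 from funext φ_permZ,
      ← List.sum_toFinset _ permList_nodup, ← univ_eq_permList]
  rw [h1, keyZ]
  rw [map_add, map_add, map_zsmul, map_zsmul, map_zsmul, _root_.map_one]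
  simp only [map_add, φ_permZ]
  rw [← Int.cast_smul_eq_zsmul ℂ (-6), ← Int.cast_smul_eq_zsmul ℂ (4),
    ← Int.cast_smul_eq_zsmul ℂ (2)]
  norm_num

theorem symProj4_eq_pauli_expansion :
    (1/24 : ℂ) • ∑ π : Equiv.Perm (Fin 4), permOp 2 4 π
      = (15/48 : ℂ) • ((1 : Matrix (Fin 4 → Fin 2) (Fin 4 → Fin 2) ℂ)
          + (1/3 : ℂ) • (sdot 0 1 + sdot 0 2 + sdot 0 3 + sdot 1 2 + sdot 1 3 + sdot 2 3)
          + (1/15 : ℂ) • (sdot 0 1 * sdot 2 3 + sdot 0 2 * sdot 1 3 + sdot 0 3 * sdot 1 2)) := by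
  have hp : ∀ σ τ : Equiv.Perm (Fin 4),
      ((2:ℂ) • permOp 2 4 σ - 1) * ((2:ℂ) • permOp 2 4 τ - 1)
        = (4:ℂ) • permOp 2 4 (σ * τ) - (2:ℂ) • permOp 2 4 σ - (2:ℂ) • permOp 2 4 τ + 1 := by
    intro σ τ
    rw [permOp_mul]
    simp only [sub_mul, mul_sub, one_mul, mul_one, smul_mul_assoc, mul_smul_comm, smul_smul]
    module
  rw [keyC, sdot_eq 0 1 (by decide), sdot_eq 0 2 (by decide), sdot_eq 0 3 (by decide),
    sdot_eq 1 2 (by decide), sdot_eq 1 3 (by decide), sdot_eq 2 3 (by decide),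
    hp, hp, hp]
  module
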